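/- (Lemma 1, bias part) In the multi-site regression model with weights τ_i = σ₁/σ_i, let Bias_β = E β̂ − β* = (Σ̂₁ᵏ)⁻¹ Σ_{i=2}^k n_iτ_i²Σ̂_i Δβ_i be the bias of the pooled estimator (the single-site OLS estimator on site 1 is unbiased). Then ‖Bias_β‖₂² ≤ ‖G^{-1/2}Δβ‖₂² · ‖(Σ̂₁ᵏ)⁻²(Σ̂₂ᵏ(n₁Σ̂₁)⁻¹Σ̂₂ᵏ + Σ̂₂ᵏ)‖_*. -/

import Mathlib

open Matrix

open scoped ComplexOrder in
/-- The square root of a positive semidefinite matrix, as `Matrix.PosSemidef.sqrt` was defined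
in Mathlib (Dec 2024): `U * diagonal (√λ) * Uᴴ` with `U` the eigenvector unitary. -/
noncomputable def Matrix.PosSemidef.sqrt {n 𝕜 : Type*} [Fintype n] [RCLike 𝕜] [DecidableEq n]
    {A : Matrix n n 𝕜} (hA : A.PosSemidef) : Matrix n n 𝕜 :=
  hA.1.eigenvectorUnitary.1 * diagonal ((↑) ∘ Real.sqrt ∘ hA.1.eigenvalues) *
    (star hA.1.eigenvectorUnitary : Matrix n n 𝕜)

open scoped ComplexOrder MatrixOrder in
theorem Matrix.PosSemidef.sqrt_eq_CFC {n 𝕜 : Type*} [Fintype n] [RCLike 𝕜] [DecidableEq n]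
    {A : Matrix n n 𝕜} (hA : A.PosSemidef) : hA.sqrt = CFC.sqrt A := by
  rw [CFC.sqrt_eq_cfc, cfc_nnreal_eq_real _ A hA.nonneg, hA.1.cfc_eq]
  rw [IsHermitian.cfc, Unitary.conjStarAlgAut_apply, Matrix.PosSemidef.sqrt]
  congr 3
  funext i
  simp only [Function.comp_apply]
  rw [Real.coe_sqrt, Real.coe_toNNReal _ (hA.eigenvalues_nonneg i)]

open scoped ComplexOrder MatrixOrder in
theorem Matrix.PosSemidef.posSemidef_sqrt {n 𝕜 : Type*} [Fintype n] [RCLike 𝕜] [DecidableEq n]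
    {A : Matrix n n 𝕜} (hA : A.PosSemidef) : hA.sqrt.PosSemidef := by
  rw [hA.sqrt_eq_CFC]
  exact (CFC.sqrt_nonneg A).posSemidef

open scoped ComplexOrder MatrixOrder in
theorem Matrix.PosSemidef.sqrt_mul_self {n 𝕜 : Type*} [Fintype n] [RCLike 𝕜] [DecidableEq n]
    {A : Matrix n n 𝕜} (hA : A.PosSemidef) : hA.sqrt * hA.sqrt = A := by
  rw [hA.sqrt_eq_CFC]
  exact CFC.sqrt_mul_sqrt_self A hA.nonneg

open scoped ComplexOrder MatrixOrder in
theorem Matrix.PosSemidef.eq_sqrt_of_sq_eq {n 𝕜 : Type*} [Fintype n] [RCLike 𝕜] [DecidableEq n]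
    {A B : Matrix n n 𝕜} (hA : A.PosSemidef) (hB : B.PosSemidef) (hAB : A ^ 2 = B) :
    A = hB.sqrt := by
  rw [hB.sqrt_eq_CFC, eq_comm, CFC.sqrt_eq_iff B A hB.nonneg hA.nonneg, ← pow_two, hAB]

/-- The nuclear norm of a real square matrix: the sum of its singular values,
i.e. `tr √(AᵀA)`. -/
noncomputable def nuclearNorm {d : Type*} [Fintype d] [DecidableEq d]
    (A : Matrix d d ℝ) : ℝ :=
  (Matrix.posSemidef_conjTranspose_mul_self A).sqrt.trace

lemma trace_le_nuclearNorm {d : Type*} [Fintype d] [DecidableEq d] (A : Matrix d d ℝ) :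
    A.trace ≤ nuclearNorm A := by
  have h : (Aᴴ * A).PosSemidef := Matrix.posSemidef_conjTranspose_mul_self A
  set B := h.sqrt with hBdef
  have hBpsd : B.PosSemidef := h.posSemidef_sqrt
  have hH : B.IsHermitian := hBpsd.1
  set Uc : Matrix d d ℝ := (hH.eigenvectorUnitary : Matrix d d ℝ) with hUc
  have hUU : star Uc * Uc = 1 := Unitary.coe_star_mul_self hH.eigenvectorUnitary
  have hUU' : Uc * star Uc = 1 := (Matrix.mem_unitaryGroup_iff).mp hH.eigenvectorUnitary.2
  -- trace of B is sum of eigenvalues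
  have hBtr : B.trace = ∑ i, hH.eigenvalues i := by
    calc B.trace = (Uc * diagonal (RCLike.ofReal ∘ hH.eigenvalues) * star Uc).trace := by
          exact congrArg Matrix.trace hH.spectral_theorem
      _ = (star Uc * Uc * diagonal (RCLike.ofReal ∘ hH.eigenvalues)).trace := by
          rw [trace_mul_cycle]
      _ = ∑ i, hH.eigenvalues i := by
          rw [hUU, one_mul, trace_diagonal]; simp
  -- the eigenvectors
  have hvnorm : ∀ i, ∑ j, (⇑(hH.eigenvectorBasis i) : d → ℝ) j * (⇑(hH.eigenvectorBasis i) : d → ℝ) j = 1 := by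
    intro i
    have h1 : ‖hH.eigenvectorBasis i‖ = 1 := hH.eigenvectorBasis.orthonormal.1 i
    rw [EuclideanSpace.norm_eq] at h1
    have h2 : ∑ j, ‖(⇑(hH.eigenvectorBasis i) : d → ℝ) j‖ ^ 2 = 1 := by
      have := congrArg (· ^ 2) h1
      simpa [Real.sq_sqrt (Finset.sum_nonneg fun j _ => sq_nonneg _)] using this
    calc ∑ j, (⇑(hH.eigenvectorBasis i) : d → ℝ) j * (⇑(hH.eigenvectorBasis i) : d → ℝ) j
        = ∑ j, ‖(⇑(hH.eigenvectorBasis i) : d → ℝ) j‖ ^ 2 := by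
          refine Finset.sum_congr rfl fun j _ => ?_
          rw [Real.norm_eq_abs, sq_abs, pow_two]
      _ = 1 := h2
  -- trace of A as sum of diagonal entries in the eigenbasis
  have htrA : A.trace = ∑ i, (⇑(hH.eigenvectorBasis i)) ⬝ᵥ (A *ᵥ ⇑(hH.eigenvectorBasis i)) := by
    have : A.trace = (star Uc * A * Uc).trace := by
      rw [trace_mul_cycle, hUU', one_mul]
    rw [this, Matrix.trace]
    refine Finset.sum_congr rfl fun i _ => ?_
    simp only [Matrix.diag_apply, Matrix.mul_apply, Matrix.star_apply, star_trivial,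
      dotProduct, Matrix.mulVec, hUc, Matrix.IsHermitian.eigenvectorUnitary_apply]
    simp only [Finset.sum_mul, Finset.mul_sum]
    rw [Finset.sum_comm]
    refine Finset.sum_congr rfl fun j _ => Finset.sum_congr rfl fun k _ => by ring
  rw [htrA, nuclearNorm, ← hBdef, hBtr]
  refine Finset.sum_le_sum fun i _ => ?_
  set x : d → ℝ := ⇑(hH.eigenvectorBasis i) with hx
  have hμ : 0 ≤ hH.eigenvalues i := hBpsd.eigenvalues_nonneg i
  have hAx : (A *ᵥ x) ⬝ᵥ (A *ᵥ x) = (hH.eigenvalues i) ^ 2 := by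
    have hxx : ∑ j, x j * x j = 1 := hvnorm i
    have h1 : (A *ᵥ x) ⬝ᵥ (A *ᵥ x) = ((Aᵀ * A) *ᵥ x) ⬝ᵥ x := by
      rw [dotProduct_mulVec, ← Matrix.mulVec_transpose, Matrix.mulVec_mulVec]
    have h2 : Aᵀ * A = B * B := by
      rw [← Matrix.conjTranspose_eq_transpose_of_trivial, h.sqrt_mul_self]
    have h3 : B *ᵥ x = hH.eigenvalues i • x := hH.mulVec_eigenvectorBasis i
    rw [h1, h2, ← Matrix.mulVec_mulVec, h3, Matrix.mulVec_smul, h3, smul_smul,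
      smul_dotProduct, dotProduct, hxx, smul_eq_mul, mul_one, ← pow_two]
  have hCS : (x ⬝ᵥ (A *ᵥ x)) ^ 2 ≤ (hH.eigenvalues i) ^ 2 := by
    have := Finset.sum_mul_sq_le_sq_mul_sq Finset.univ x (A *ᵥ x)
    calc (x ⬝ᵥ (A *ᵥ x)) ^ 2 = (∑ j, x j * (A *ᵥ x) j) ^ 2 := rfl
      _ ≤ (∑ j, x j ^ 2) * ∑ j, (A *ᵥ x) j ^ 2 := this
      _ = (hH.eigenvalues i) ^ 2 := by
          have hxx : ∑ j, x j * x j = 1 := hvnorm i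
          have e1 : ∑ j, x j ^ 2 = 1 := by
            simp only [pow_two]; exact hxx
          have e2 : ∑ j, (A *ᵥ x) j ^ 2 = (hH.eigenvalues i) ^ 2 := by
            rw [← hAx, dotProduct]; simp [sq]
          rw [e1, e2, one_mul]
  calc x ⬝ᵥ (A *ᵥ x) ≤ |x ⬝ᵥ (A *ᵥ x)| := le_abs_self _
    _ = Real.sqrt ((x ⬝ᵥ (A *ᵥ x)) ^ 2) := (Real.sqrt_sq_eq_abs _).symm
    _ ≤ Real.sqrt ((hH.eigenvalues i) ^ 2) := Real.sqrt_le_sqrt hCS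
    _ = hH.eigenvalues i := by rw [Real.sqrt_sq hμ]

lemma sum_erase_zero {M : Type*} [AddCommGroup M] {k : ℕ} (f : Fin (k + 1) → M) :
    ∑ i ∈ Finset.univ.erase 0, f i = ∑ i : Fin k, f i.succ := by
  have h := Finset.add_sum_erase Finset.univ f (Finset.mem_univ (0 : Fin (k + 1)))
  have h2 := Fin.sum_univ_succ f
  exact add_left_cancel (h.trans h2)

lemma block_LGL {k p : ℕ} (W : Fin k → Matrix (Fin p) (Fin p) ℝ)
    (Ainv : Matrix (Fin p) (Fin p) ℝ)
    (hWinv : ∀ i, (W i)⁻¹ * W i = 1) (hWsym : ∀ i, (W i)ᵀ = W i) :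
    (Matrix.of fun (j : Fin p) (q : Fin k × Fin p) => W q.1 j q.2) *
        (Matrix.of fun (q r : Fin k × Fin p) =>
          Ainv q.2 r.2 + if q.1 = r.1 then (W q.1)⁻¹ q.2 r.2 else 0) *
        (Matrix.of fun (j : Fin p) (q : Fin k × Fin p) => W q.1 j q.2)ᵀ
      = (∑ i, W i) * Ainv * (∑ i, W i) + (∑ i, W i) := by
  set L : Matrix (Fin p) (Fin k × Fin p) ℝ :=
    Matrix.of fun (j : Fin p) (q : Fin k × Fin p) => W q.1 j q.2 with hL
  set E : Matrix (Fin p) (Fin k × Fin p) ℝ :=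
    Matrix.of fun (s : Fin p) (q : Fin k × Fin p) => if s = q.2 then 1 else 0 with hE
  set G1 : Matrix (Fin k × Fin p) (Fin k × Fin p) ℝ :=
    Matrix.of fun (q r : Fin k × Fin p) => Ainv q.2 r.2 with hG1
  set G2 : Matrix (Fin k × Fin p) (Fin k × Fin p) ℝ :=
    Matrix.of fun (q r : Fin k × Fin p) =>
      if q.1 = r.1 then (W q.1)⁻¹ q.2 r.2 else 0 with hG2
  have hsplit : (Matrix.of fun (q r : Fin k × Fin p) =>
      Ainv q.2 r.2 + if q.1 = r.1 then (W q.1)⁻¹ q.2 r.2 else 0) = G1 + G2 := by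
    ext q r; simp [hG1, hG2]
  have hLE : L * Eᵀ = ∑ i, W i := by
    ext j s
    simp [hL, hE, Matrix.mul_apply, Fintype.sum_prod_type, Matrix.sum_apply, mul_ite,
      eq_comm]
  have hEL : E * Lᵀ = ∑ i, W i := by
    have : (L * Eᵀ)ᵀ = E * Lᵀ := by rw [Matrix.transpose_mul, Matrix.transpose_transpose]
    rw [← this, hLE, Matrix.transpose_sum]
    exact Finset.sum_congr rfl fun i _ => hWsym i
  have hG1eq : G1 = Eᵀ * Ainv * E := by
    ext q r
    simp [hG1, hE, Matrix.mul_apply, ite_mul, mul_ite]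
  have hG2L : G2 * Lᵀ = Eᵀ := by
    ext q j
    simp only [hG2, hL, hE, Matrix.mul_apply, Matrix.transpose_apply, Matrix.of_apply,
      Fintype.sum_prod_type, ite_mul, zero_mul]
    rw [Finset.sum_comm]
    simp only [Finset.sum_ite_eq, Finset.mem_univ, if_true]
    have : ∑ t, (W q.1)⁻¹ q.2 t * W q.1 j t = ((W q.1)⁻¹ * (W q.1)ᵀ) q.2 j := by
      simp [Matrix.mul_apply]
    rw [this, hWsym, hWinv]
    simp [Matrix.one_apply, eq_comm]
  have h2 : L * G2 * Lᵀ = ∑ i, W i := by rw [Matrix.mul_assoc, hG2L, hLE]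
  have h1 : L * G1 * Lᵀ = (∑ i, W i) * Ainv * (∑ i, W i) := by
    rw [hG1eq, show L * (Eᵀ * Ainv * E) * Lᵀ = (L * Eᵀ) * Ainv * (E * Lᵀ) by
      simp only [Matrix.mul_assoc], hLE, hEL]
  rw [hsplit, Matrix.mul_add, Matrix.add_mul, h1, h2]

/-- **Lemma 1, bias part.** Multi-site regression with `k+1` sites
(site `0` is "site 1"), weights `τᵢ = σ₁/σᵢ`, `Σ̂₂ᵏ = Σ_{i≠1} nᵢτᵢ²Σ̂ᵢ`,
`Σ̂₁ᵏ = n₁Σ̂₁ + Σ̂₂ᵏ`.  The bias `Bias_β = (Σ̂₁ᵏ)⁻¹ Σ_{i≠1} nᵢτᵢ²Σ̂ᵢΔβᵢ` of the pooled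
estimator satisfies
`‖Bias_β‖₂² ≤ ‖G^{-1/2}Δβ‖₂² · ‖(Σ̂₁ᵏ)⁻²(Σ̂₂ᵏ(n₁Σ̂₁)⁻¹Σ̂₂ᵏ + Σ̂₂ᵏ)‖₊`, where `G` is the
block matrix with diagonal blocks `(n₁Σ̂₁)⁻¹ + (nᵢτᵢ²Σ̂ᵢ)⁻¹` and off-diagonal blocks
`(n₁Σ̂₁)⁻¹`, and `G^{-1/2} = √(G⁻¹)`. -/
theorem pooling_bias_bound (k p : ℕ) (n : Fin (k + 1) → ℕ) (hn : ∀ i, 0 < n i)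
    (X : ∀ i : Fin (k + 1), Matrix (Fin (n i)) (Fin p) ℝ)
    (Shat : Fin (k + 1) → Matrix (Fin p) (Fin p) ℝ)
    (hShat : ∀ i, (n i : ℝ) • Shat i = (X i)ᵀ * X i)
    (hinv : ∀ i, IsUnit (Shat i).det)
    (Δβ : Fin (k + 1) → Fin p → ℝ) (hΔβ0 : Δβ 0 = 0)
    (σ : Fin (k + 1) → ℝ) (hσ : ∀ i, 0 < σ i)
    (S2k S1k : Matrix (Fin p) (Fin p) ℝ)
    (hS2k : S2k = ∑ i ∈ Finset.univ.erase 0, ((n i : ℝ) * (σ 0 / σ i) ^ 2) • Shat i)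
    (hS1k : S1k = (n 0 : ℝ) • Shat 0 + S2k)
    (Biasβ : Fin p → ℝ)
    (hBias : Biasβ = S1k⁻¹.mulVec
      (∑ i ∈ Finset.univ.erase 0,
        ((n i : ℝ) * (σ 0 / σ i) ^ 2) • (Shat i).mulVec (Δβ i)))
    (G : Matrix (Fin k × Fin p) (Fin k × Fin p) ℝ)
    (hG : G = Matrix.of fun q r =>
      (((n 0 : ℝ) • Shat 0)⁻¹) q.2 r.2
        + if q.1 = r.1 then
            ((((n q.1.succ : ℝ) * (σ 0 / σ q.1.succ) ^ 2) • Shat q.1.succ)⁻¹) q.2 r.2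
          else 0)
    (hGpd : G.PosDef) :
    ∑ j, (Biasβ j) ^ 2
      ≤ (∑ q, ((hGpd.inv.posSemidef.sqrt).mulVec (fun q => Δβ q.1.succ q.2) q) ^ 2)
        * nuclearNorm (S1k⁻¹ * S1k⁻¹ * (S2k * ((n 0 : ℝ) • Shat 0)⁻¹ * S2k + S2k)) := by
  classical
  set A : Matrix (Fin p) (Fin p) ℝ := (n 0 : ℝ) • Shat 0 with hAdef
  set W : Fin k → Matrix (Fin p) (Fin p) ℝ :=
    fun i => ((n i.succ : ℝ) * (σ 0 / σ i.succ) ^ 2) • Shat i.succ with hWdef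
  have hcpos : ∀ i : Fin (k + 1), 0 < (n i : ℝ) * (σ 0 / σ i) ^ 2 := fun i =>
    mul_pos (by exact_mod_cast hn i) (pow_pos (div_pos (hσ 0) (hσ i)) 2)
  have hShatSym : ∀ i, (Shat i)ᵀ = Shat i := by
    intro i
    have hne : (n i : ℝ) ≠ 0 := (Nat.cast_pos.mpr (hn i)).ne'
    have h1 : (n i : ℝ) • (Shat i)ᵀ = (n i : ℝ) • Shat i := by
      calc (n i : ℝ) • (Shat i)ᵀ = ((n i : ℝ) • Shat i)ᵀ := (Matrix.transpose_smul _ _).symm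
        _ = ((X i)ᵀ * X i)ᵀ := by rw [hShat i]
        _ = (X i)ᵀ * X i := by rw [Matrix.transpose_mul, Matrix.transpose_transpose]
        _ = (n i : ℝ) • Shat i := (hShat i).symm
    exact smul_right_injective _ hne h1
  have hWsym : ∀ i, (W i)ᵀ = W i := by
    intro i; rw [hWdef]; simp [Matrix.transpose_smul, hShatSym]
  have hWdetu : ∀ i, IsUnit (W i).det := by
    intro i
    rw [hWdef]
    simp only [Matrix.det_smul]
    exact (isUnit_iff_ne_zero.mpr (pow_ne_zero _ (hcpos i.succ).ne')).mul (hinv i.succ)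
  have hWinv : ∀ i, (W i)⁻¹ * W i = 1 := fun i => Matrix.nonsing_inv_mul _ (hWdetu i)
  set L : Matrix (Fin p) (Fin k × Fin p) ℝ :=
    Matrix.of fun (j : Fin p) (q : Fin k × Fin p) => W q.1 j q.2 with hLdef
  have hS2kW : S2k = ∑ i, W i := by
    rw [hS2k, sum_erase_zero]
  have hS2kSym : S2kᵀ = S2k := by
    rw [hS2kW, Matrix.transpose_sum]
    exact Finset.sum_congr rfl fun i _ => hWsym i
  have hS1kSym : S1kᵀ = S1k := by
    rw [hS1k, Matrix.transpose_add, Matrix.transpose_smul, hShatSym 0, hS2kSym]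
  have hS1iSym : (S1k⁻¹)ᵀ = S1k⁻¹ := by
    rw [Matrix.transpose_nonsing_inv, hS1kSym]
  have hGW : G = Matrix.of fun (q r : Fin k × Fin p) =>
      A⁻¹ q.2 r.2 + if q.1 = r.1 then (W q.1)⁻¹ q.2 r.2 else 0 := by
    rw [hG]
  have hLGL : L * G * Lᵀ = S2k * A⁻¹ * S2k + S2k := by
    rw [hGW, hS2kW, hLdef]
    exact block_LGL W A⁻¹ hWinv hWsym
  -- square roots
  set S := hGpd.posSemidef.sqrt with hSdef
  have hSS : S * S = G := hGpd.posSemidef.sqrt_mul_self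
  have hSsym : Sᵀ = S := by
    have h1 := hGpd.posSemidef.posSemidef_sqrt.1
    rw [← Matrix.conjTranspose_eq_transpose_of_trivial]
    exact h1
  have hSdetunit : IsUnit S.det := by
    have hdet : S.det * S.det = G.det := by rw [← Matrix.det_mul, hSS]
    rw [isUnit_iff_ne_zero]
    intro h0
    exact hGpd.det_pos.ne' (by rw [← hdet, h0, mul_zero])
  have hT : S⁻¹ = hGpd.inv.posSemidef.sqrt := by
    have hpsd : (S⁻¹).PosSemidef := hGpd.posSemidef.posSemidef_sqrt.inv
    exact hpsd.eq_sqrt_of_sq_eq hGpd.inv.posSemidef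
      (by rw [pow_two, ← Matrix.mul_inv_rev, hSS])
  have hST : S * hGpd.inv.posSemidef.sqrt = 1 := by
    rw [← hT]; exact Matrix.mul_nonsing_inv _ hSdetunit
  set v : Fin k × Fin p → ℝ := fun q => Δβ q.1.succ q.2 with hv
  set w : Fin k × Fin p → ℝ := hGpd.inv.posSemidef.sqrt *ᵥ v with hwdef
  have hBias2 : Biasβ = (S1k⁻¹ * L) *ᵥ v := by
    rw [hBias, sum_erase_zero, ← Matrix.mulVec_mulVec]
    congr 1
    funext j
    simp only [Finset.sum_apply, Pi.smul_apply, smul_eq_mul, hLdef, hv,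
      Matrix.mulVec, dotProduct, Fintype.sum_prod_type, Matrix.of_apply, hWdef,
      Matrix.smul_apply, Finset.mul_sum]
    refine Finset.sum_congr rfl fun i _ => Finset.sum_congr rfl fun s _ =>
      by ring
  set Bm := S1k⁻¹ * L * S with hBm
  have hBias3 : Biasβ = Bm *ᵥ w := by
    rw [hBm, hwdef, Matrix.mulVec_mulVec, Matrix.mul_assoc (S1k⁻¹ * L), hST, Matrix.mul_one]
    exact hBias2
  have key1 : ∑ j, (Biasβ j) ^ 2 ≤ (∑ q, (w q) ^ 2) * ∑ j, ∑ q, (Bm j q) ^ 2 := by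
    rw [hBias3]
    have hcs : ∀ j, ((Bm *ᵥ w) j) ^ 2 ≤ (∑ q, (Bm j q) ^ 2) * (∑ q, (w q) ^ 2) := by
      intro j
      have := Finset.sum_mul_sq_le_sq_mul_sq Finset.univ (fun q => Bm j q) w
      simpa [Matrix.mulVec, dotProduct] using this
    calc ∑ j, ((Bm *ᵥ w) j) ^ 2
        ≤ ∑ j, (∑ q, (Bm j q) ^ 2) * (∑ q, (w q) ^ 2) :=
          Finset.sum_le_sum fun j _ => hcs j
      _ = (∑ q, (w q) ^ 2) * ∑ j, ∑ q, (Bm j q) ^ 2 := by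
          rw [← Finset.sum_mul, mul_comm]
  have key2 : ∑ j, ∑ q, (Bm j q) ^ 2 = (Bm * Bmᵀ).trace := by
    simp [Matrix.trace, Matrix.diag, Matrix.mul_apply, pow_two]
  have key3 : Bm * Bmᵀ = S1k⁻¹ * (S2k * A⁻¹ * S2k + S2k) * S1k⁻¹ := by
    have hBt : Bmᵀ = S * (Lᵀ * S1k⁻¹) := by
      rw [hBm, Matrix.transpose_mul, Matrix.transpose_mul, hSsym, hS1iSym]
    calc Bm * Bmᵀ = (S1k⁻¹ * L * S) * (S * (Lᵀ * S1k⁻¹)) := by rw [hBt, hBm]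
      _ = S1k⁻¹ * (L * G * Lᵀ) * S1k⁻¹ := by
          rw [← hSS]; simp only [Matrix.mul_assoc]
      _ = S1k⁻¹ * (S2k * A⁻¹ * S2k + S2k) * S1k⁻¹ := by rw [hLGL]
  have key4 : (S1k⁻¹ * (S2k * A⁻¹ * S2k + S2k) * S1k⁻¹).trace
      = (S1k⁻¹ * S1k⁻¹ * (S2k * A⁻¹ * S2k + S2k)).trace :=
    Matrix.trace_mul_cycle S1k⁻¹ (S2k * A⁻¹ * S2k + S2k) S1k⁻¹
  have hwnn : 0 ≤ ∑ q, (w q) ^ 2 := Finset.sum_nonneg fun q _ => sq_nonneg _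
  calc ∑ j, (Biasβ j) ^ 2
      ≤ (∑ q, (w q) ^ 2) * ∑ j, ∑ q, (Bm j q) ^ 2 := key1
    _ = (∑ q, (w q) ^ 2) * (S1k⁻¹ * S1k⁻¹ * (S2k * A⁻¹ * S2k + S2k)).trace := by
        rw [key2, key3, key4]
    _ ≤ (∑ q, (w q) ^ 2) * nuclearNorm (S1k⁻¹ * S1k⁻¹ * (S2k * A⁻¹ * S2k + S2k)) :=
        mul_le_mul_of_nonneg_left (trace_le_nuclearNorm _) hwnn
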